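/- Let E = k⟨x,y,z⟩/(yx − xy, zx − xz, zy − cyz) be quantum 3-space with a = b = 1 and c ∈ k not a root of unity, char k ≠ 2, graded with x, y, z in degree 1. Then the graded centre of E equals the subalgebra k[x²] generated by x². -/

import Mathlib

/-- The relations yx − xy, zx − xz, zy − c·yz of quantum 3-space with a = b = 1. -/
inductive relQS (k : Type*) [Field k] (c : k) :
    FreeAlgebra k (Fin 3) → FreeAlgebra k (Fin 3) → Prop
  | yx : relQS k c (FreeAlgebra.ι k 1 * FreeAlgebra.ι k 0)
      (FreeAlgebra.ι k 0 * FreeAlgebra.ι k 1)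
  | zx : relQS k c (FreeAlgebra.ι k 2 * FreeAlgebra.ι k 0)
      (FreeAlgebra.ι k 0 * FreeAlgebra.ι k 2)
  | zy : relQS k c (FreeAlgebra.ι k 2 * FreeAlgebra.ι k 1)
      (c • (FreeAlgebra.ι k 1 * FreeAlgebra.ι k 2))

namespace Stmt13Aux

variable {k : Type*} [Field k] (c : k)

noncomputable def mkQ : FreeAlgebra k (Fin 3) →ₐ[k] RingQuot (relQS k c) :=
  RingQuot.mkAlgHom k (relQS k c)

noncomputable def Xe : RingQuot (relQS k c) := mkQ c (FreeAlgebra.ι k 0)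
noncomputable def Ye : RingQuot (relQS k c) := mkQ c (FreeAlgebra.ι k 1)
noncomputable def Ze : RingQuot (relQS k c) := mkQ c (FreeAlgebra.ι k 2)

lemma yx_rel : Ye c * Xe c = Xe c * Ye c := by
  have := RingQuot.mkAlgHom_rel k (relQS.yx (k := k) (c := c))
  simpa [Xe, Ye, mkQ, map_mul] using this

lemma zx_rel : Ze c * Xe c = Xe c * Ze c := by
  have := RingQuot.mkAlgHom_rel k (relQS.zx (k := k) (c := c))
  simpa [Xe, Ze, mkQ, map_mul] using this

lemma zy_rel : Ze c * Ye c = c • (Ye c * Ze c) := by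
  have := RingQuot.mkAlgHom_rel k (relQS.zy (k := k) (c := c))
  simpa [Ye, Ze, mkQ, map_mul, map_smul] using this

lemma x_central (w : RingQuot (relQS k c)) : Xe c * w = w * Xe c := by
  obtain ⟨a, rfl⟩ := RingQuot.mkAlgHom_surjective k (relQS k c) w
  induction a using FreeAlgebra.induction with
  | grade0 r => rw [AlgHom.commutes]; exact (Algebra.commutes r _).symm
  | grade1 i =>
    fin_cases i
    · rfl
    · exact (yx_rel c).symm
    · exact (zx_rel c).symm
  | mul a b ha hb =>
    rw [map_mul, ← mul_assoc, ha, mul_assoc, hb, mul_assoc]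
  | add a b ha hb =>
    rw [map_add, mul_add, add_mul, ha, hb]


lemma xpow_central (i : ℕ) (w : RingQuot (relQS k c)) : Xe c ^ i * w = w * Xe c ^ i := by
  induction i with
  | zero => simp
  | succ n ih => rw [pow_succ, mul_assoc, x_central, ← mul_assoc, ih, mul_assoc]

lemma zpow_y (l : ℕ) : Ze c ^ l * Ye c = c ^ l • (Ye c * Ze c ^ l) := by
  induction l with
  | zero => simp
  | succ n ih =>
    rw [pow_succ, mul_assoc, zy_rel, mul_smul_comm, ← mul_assoc, ih, smul_mul_assoc,
      smul_smul, mul_assoc, ← pow_succ, ← pow_succ']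

lemma zpow_ypow (l b : ℕ) : Ze c ^ l * Ye c ^ b = c ^ (l * b) • (Ye c ^ b * Ze c ^ l) := by
  induction b with
  | zero => simp
  | succ n ih =>
    rw [pow_succ, ← mul_assoc, ih, smul_mul_assoc, mul_assoc, zpow_y, mul_smul_comm,
      smul_smul, ← pow_add, ← mul_assoc, Nat.mul_succ]

/-- the monomial x^i y^j z^l -/
noncomputable def μ (p : ℕ × ℕ × ℕ) : RingQuot (relQS k c) :=
  Xe c ^ p.1 * Ye c ^ p.2.1 * Ze c ^ p.2.2

lemma mu_mul_x (p : ℕ × ℕ × ℕ) : μ c p * Xe c = μ c (p.1 + 1, p.2.1, p.2.2) := by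
  rw [μ, μ, ← x_central, ← mul_assoc, ← mul_assoc, ← pow_succ']

lemma mu_mul_z (p : ℕ × ℕ × ℕ) : μ c p * Ze c = μ c (p.1, p.2.1, p.2.2 + 1) := by
  rw [μ, μ, mul_assoc, ← pow_succ, mul_assoc]

lemma mu_mul_y (p : ℕ × ℕ × ℕ) :
    μ c p * Ye c = c ^ p.2.2 • μ c (p.1, p.2.1 + 1, p.2.2) := by
  rw [μ, μ, mul_assoc, zpow_y, mul_smul_comm, ← mul_assoc, mul_assoc (Xe c ^ p.1), ← pow_succ]

lemma x_mul_mu (p : ℕ × ℕ × ℕ) : Xe c * μ c p = μ c (p.1 + 1, p.2.1, p.2.2) := by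
  rw [x_central, mu_mul_x]

lemma y_mul_mu (p : ℕ × ℕ × ℕ) : Ye c * μ c p = μ c (p.1, p.2.1 + 1, p.2.2) := by
  have h : Ye c * Xe c ^ p.1 = Xe c ^ p.1 * Ye c := (xpow_central c p.1 (Ye c)).symm
  rw [μ, μ, ← mul_assoc, ← mul_assoc, h, mul_assoc (Xe c ^ p.1), ← pow_succ']

lemma z_mul_mu (p : ℕ × ℕ × ℕ) :
    Ze c * μ c p = c ^ p.2.1 • μ c (p.1, p.2.1, p.2.2 + 1) := by
  have h1 : Ze c * Ye c ^ p.2.1 = c ^ p.2.1 • (Ye c ^ p.2.1 * Ze c) := by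
    simpa using zpow_ypow c 1 p.2.1
  rw [μ, μ, ← mul_assoc, ← mul_assoc, ← xpow_central, mul_assoc (Xe c ^ p.1), h1,
    mul_smul_comm, smul_mul_assoc, mul_assoc (Xe c ^ p.1), mul_assoc (Ye c ^ p.2.1),
    ← pow_succ', ← mul_assoc]

lemma mu_zero : μ c (0, 0, 0) = 1 := by simp [μ]

lemma span_mu_top : Submodule.span k (Set.range (μ c)) = ⊤ := by
  set S := Submodule.span k (Set.range (μ c)) with hS
  have hmem : ∀ p, μ c p ∈ S := fun p => Submodule.subset_span ⟨p, rfl⟩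
  have hone : (1 : RingQuot (relQS k c)) ∈ S := mu_zero c ▸ hmem (0, 0, 0)
  have hstep : ∀ i : Fin 3, ∀ w ∈ S, w * mkQ c (FreeAlgebra.ι k i) ∈ S := by
    intro i w hw
    induction hw using Submodule.span_induction with
    | mem u hu =>
      obtain ⟨p, rfl⟩ := hu
      fin_cases i
      · show μ c p * Xe c ∈ S
        rw [mu_mul_x]; exact hmem _
      · show μ c p * Ye c ∈ S
        rw [mu_mul_y]; exact S.smul_mem _ (hmem _)
      · show μ c p * Ze c ∈ S
        rw [mu_mul_z]; exact hmem _
    | zero => simpa using S.zero_mem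
    | add u v _ _ hu hv => rw [add_mul]; exact S.add_mem hu hv
    | smul a u _ hu => rw [smul_mul_assoc]; exact S.smul_mem a hu
  have hmul : ∀ (a : FreeAlgebra k (Fin 3)), ∀ w ∈ S, w * mkQ c a ∈ S := by
    intro a
    induction a using FreeAlgebra.induction with
    | grade0 r =>
      intro w hw
      rw [AlgHom.commutes, ← Algebra.commutes, ← Algebra.smul_def]
      exact S.smul_mem r hw
    | grade1 i => exact hstep i
    | mul a b ha hb =>
      intro w hw
      rw [map_mul, ← mul_assoc]
      exact hb _ (ha _ hw)
    | add a b ha hb =>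
      intro w hw
      rw [map_add, mul_add]
      exact S.add_mem (ha _ hw) (hb _ hw)
  rw [eq_top_iff]
  intro w _
  obtain ⟨a, rfl⟩ := RingQuot.mkAlgHom_surjective k (relQS k c) w
  simpa [mkQ] using hmul a 1 hone



/-! ### Faithful representation on `(ℕ × ℕ × ℕ) →₀ k` -/

abbrev M (k : Type*) [Field k] := (ℕ × ℕ × ℕ) →₀ k

noncomputable def LX : M k →ₗ[k] M k :=
  Finsupp.lmapDomain k k (fun p => (p.1 + 1, p.2.1, p.2.2))

noncomputable def LY : M k →ₗ[k] M k :=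
  Finsupp.lmapDomain k k (fun p => (p.1, p.2.1 + 1, p.2.2))

noncomputable def LZ : M k →ₗ[k] M k :=
  Finsupp.lsum k fun p => c ^ p.2.1 • Finsupp.lsingle (p.1, p.2.1, p.2.2 + 1)

@[simp] lemma LX_single (p : ℕ × ℕ × ℕ) (r : k) :
    LX (Finsupp.single p r) = Finsupp.single (p.1 + 1, p.2.1, p.2.2) r := by
  simp [LX, Finsupp.mapDomain_single]

@[simp] lemma LY_single (p : ℕ × ℕ × ℕ) (r : k) :
    LY (Finsupp.single p r) = Finsupp.single (p.1, p.2.1 + 1, p.2.2) r := by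
  simp [LY, Finsupp.mapDomain_single]

@[simp] lemma LZ_single (p : ℕ × ℕ × ℕ) (r : k) :
    LZ c (Finsupp.single p r) = c ^ p.2.1 • Finsupp.single (p.1, p.2.1, p.2.2 + 1) r := by
  simp [LZ, Finsupp.lsum_single]

noncomputable def ρfree : FreeAlgebra k (Fin 3) →ₐ[k] Module.End k (M k) :=
  FreeAlgebra.lift k ![LX, LY, LZ c]

lemma LYLX : (LY : Module.End k (M k)) * LX = LX * LY := by
  refine Finsupp.lhom_ext fun p r => ?_
  simp [Module.End.mul_apply]

lemma LZLX : (LZ c : Module.End k (M k)) * LX = LX * LZ c := by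
  refine Finsupp.lhom_ext fun p r => ?_
  simp only [Module.End.mul_apply, LX_single, LZ_single, map_smul]

lemma LZLY : (LZ c : Module.End k (M k)) * LY = c • (LY * LZ c) := by
  refine Finsupp.lhom_ext fun p r => ?_
  simp only [Module.End.mul_apply, LinearMap.smul_apply, LY_single, LZ_single, map_smul]
  rw [smul_smul, pow_succ]
  ring_nf

noncomputable def ρ : RingQuot (relQS k c) →ₐ[k] Module.End k (M k) :=
  RingQuot.liftAlgHom k ⟨ρfree c, by
    rintro a b ⟨⟩ <;>
      simp only [map_mul, map_smul, ρfree, FreeAlgebra.lift_ι_apply, Matrix.cons_val_zero,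
        Matrix.cons_val_one, Matrix.head_cons, Matrix.cons_val_two, Matrix.tail_cons]
    · exact LYLX
    · exact LZLX c
    · exact LZLY c⟩

@[simp] lemma rho_X : ρ c (Xe c) = LX := by
  rw [Xe, mkQ, ρ, RingQuot.liftAlgHom_mkAlgHom_apply, ρfree, FreeAlgebra.lift_ι_apply]
  rfl

@[simp] lemma rho_Y : ρ c (Ye c) = LY := by
  rw [Ye, mkQ, ρ, RingQuot.liftAlgHom_mkAlgHom_apply, ρfree, FreeAlgebra.lift_ι_apply]
  rfl

@[simp] lemma rho_Z : ρ c (Ze c) = LZ c := by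
  rw [Ze, mkQ, ρ, RingQuot.liftAlgHom_mkAlgHom_apply, ρfree, FreeAlgebra.lift_ι_apply]
  rfl

noncomputable def v : RingQuot (relQS k c) →ₗ[k] M k where
  toFun w := ρ c w (Finsupp.single ((0 : ℕ), (0 : ℕ), (0 : ℕ)) (1 : k))
  map_add' a b := by simp
  map_smul' r a := by simp

@[simp] lemma v_apply (w : RingQuot (relQS k c)) :
    v c w = ρ c w (Finsupp.single ((0 : ℕ), (0 : ℕ), (0 : ℕ)) (1 : k)) := rfl

lemma LZ_pow (l : ℕ) (i d : ℕ) (r : k) :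
    (LZ c ^ l) (Finsupp.single (i, 0, d) r) = Finsupp.single (i, 0, d + l) r := by
  induction l with
  | zero => simp
  | succ n ih =>
    rw [pow_succ', Module.End.mul_apply, ih, LZ_single]
    simp [add_assoc]

lemma LY_pow (j : ℕ) (p : ℕ × ℕ × ℕ) (r : k) :
    (LY ^ j) (Finsupp.single p r) = Finsupp.single (p.1, p.2.1 + j, p.2.2) r := by
  induction j with
  | zero => simp
  | succ n ih =>
    rw [pow_succ', Module.End.mul_apply, ih, LY_single, add_assoc]

lemma LX_pow (i : ℕ) (p : ℕ × ℕ × ℕ) (r : k) :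
    (LX ^ i) (Finsupp.single p r) = Finsupp.single (p.1 + i, p.2.1, p.2.2) r := by
  induction i with
  | zero => simp
  | succ n ih =>
    rw [pow_succ', Module.End.mul_apply, ih, LX_single, add_assoc]

@[simp] lemma v_mu (p : ℕ × ℕ × ℕ) : v c (μ c p) = Finsupp.single p 1 := by
  rw [v_apply, μ]
  simp only [map_mul, map_pow, rho_X, rho_Y, rho_Z, Module.End.mul_apply]
  rw [LZ_pow, LY_pow, LX_pow]
  simp


lemma mu_x (i : ℕ) : μ c (i, 0, 0) = Xe c ^ i := by simp [μ]

lemma coords (w : RingQuot (relQS k c)) :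
    ∃ d : (ℕ × ℕ × ℕ) →₀ k, (d.sum fun p r => r • μ c p) = w := by
  have hw : w ∈ Submodule.span k (Set.range (μ c)) := by rw [span_mu_top]; trivial
  exact Finsupp.mem_span_range_iff_exists_finsupp.mp hw

lemma v_sum (d : (ℕ × ℕ × ℕ) →₀ k) (σ : ℕ × ℕ × ℕ → ℕ × ℕ × ℕ) (f : ℕ × ℕ × ℕ → k → k) :
    v c (d.sum fun p r => f p r • μ c (σ p)) =
      d.sum fun p r => Finsupp.single (σ p) (f p r) := by
  rw [map_finsuppSum]
  refine Finsupp.sum_congr fun p _ => ?_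
  rw [map_smul, v_mu, Finsupp.smul_single, smul_eq_mul, mul_one]

lemma coeff_eq {d : (ℕ × ℕ × ℕ) →₀ k} {σ : ℕ × ℕ × ℕ → ℕ × ℕ × ℕ}
    (hσ : Function.Injective σ) {f g : ℕ × ℕ × ℕ → k → k}
    (h : (d.sum fun p r => f p r • μ c (σ p)) = d.sum fun p r => g p r • μ c (σ p))
    {p₀ : ℕ × ℕ × ℕ} (hp : p₀ ∈ d.support) : f p₀ (d p₀) = g p₀ (d p₀) := by
  have h2 := congrArg (v c) h
  rw [v_sum, v_sum] at h2
  have h3 := DFunLike.congr_fun h2 (σ p₀)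
  rw [Finsupp.sum_apply, Finsupp.sum_apply, Finsupp.sum, Finsupp.sum] at h3
  simp only [Finsupp.single_apply, hσ.eq_iff] at h3
  rw [Finset.sum_ite_eq' d.support p₀ (fun p => f p (d p)),
    Finset.sum_ite_eq' d.support p₀ (fun p => g p (d p)), if_pos hp, if_pos hp] at h3
  exact h3

end Stmt13Aux

/- For E = k⟨x,y,z⟩/(yx−xy, zx−xz, zy−cyz), char k ≠ 2, c not a root of unity,
   graded by word length with x,y,z in degree 1, the graded centre of E equals
   the subalgebra k[x²] generated by x². -/
open Stmt13Aux in
theorem stmt13 (k : Type*) [Field k] (c : k) (hc : c ≠ 0)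
    (hcroot : ∀ m : ℕ, 1 ≤ m → c ^ m ≠ 1) (h2 : (2 : k) ≠ 0)
    (g : Fin 3 → RingQuot (relQS k c))
    (hg : ∀ i, g i = RingQuot.mkAlgHom k (relQS k c) (FreeAlgebra.ι k i))
    (𝒜 : ℕ → Submodule k (RingQuot (relQS k c))) [GradedAlgebra 𝒜]
    (hgrading : ∀ n, 𝒜 n = Submodule.span k
      {w | ∃ l : List (Fin 3), l.length = n ∧ w = (l.map g).prod}) :
    Algebra.adjoin k {z : RingQuot (relQS k c) | ∃ n, z ∈ 𝒜 n ∧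
        ∀ (m : ℕ) (y : RingQuot (relQS k c)), y ∈ 𝒜 m →
          z * y = ((-1 : k) ^ (n * m)) • (y * z)}
      = Algebra.adjoin k {(g 0) ^ 2} := by
  have hgx : g 0 = Xe c := by rw [hg]; rfl
  have hgy : g 1 = Ye c := by rw [hg]; rfl
  have hgz : g 2 = Ze c := by rw [hg]; rfl
  have hXpow : ∀ i : ℕ, Xe c ^ i ∈ 𝒜 i := by
    intro i
    rw [hgrading]
    refine Submodule.subset_span ⟨List.replicate i 0, List.length_replicate, ?_⟩
    rw [List.map_replicate, List.prod_replicate, hgx]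
  have hX1 : Xe c ∈ 𝒜 1 := by simpa using hXpow 1
  have hY1 : Ye c ∈ 𝒜 1 := by
    rw [hgrading]
    refine Submodule.subset_span ⟨[1], rfl, ?_⟩
    simp [hgy]
  have hZ1 : Ze c ∈ 𝒜 1 := by
    rw [hgrading]
    refine Submodule.subset_span ⟨[2], rfl, ?_⟩
    simp [hgz]
  -- x² is graded-central
  have hx2mem : (g 0) ^ 2 ∈ {z : RingQuot (relQS k c) | ∃ n, z ∈ 𝒜 n ∧
      ∀ (m : ℕ) (y : RingQuot (relQS k c)), y ∈ 𝒜 m →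
        z * y = ((-1 : k) ^ (n * m)) • (y * z)} := by
    refine ⟨2, by rw [hgx]; exact hXpow 2, ?_⟩
    intro m y _
    have h1 : ((-1 : k) ^ (2 * m)) = 1 := by
      rw [pow_mul]; simp
    rw [h1, one_smul, hgx, xpow_central]
  refine le_antisymm ?_ ?_
  · rw [Algebra.adjoin_le_iff]
    rintro w ⟨n, hwn, hcen⟩
    -- coordinates
    obtain ⟨d, hd⟩ := coords c w
    by_cases hd0 : d = 0
    · have : w = 0 := by rw [← hd, hd0]; simp
      rw [this]; exact Subalgebra.zero_mem _
    obtain ⟨q, hq⟩ := Finsupp.support_nonempty_iff.mpr hd0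
    -- commutation with x
    have hinjx : Function.Injective (fun p : ℕ × ℕ × ℕ => (p.1 + 1, p.2.1, p.2.2)) := by
      rintro ⟨a1, a2, a3⟩ ⟨b1, b2, b3⟩ h
      simp only [Prod.mk.injEq] at h
      simp only [Prod.mk.injEq]
      omega
    have hinjy : Function.Injective (fun p : ℕ × ℕ × ℕ => (p.1, p.2.1 + 1, p.2.2)) := by
      rintro ⟨a1, a2, a3⟩ ⟨b1, b2, b3⟩ h
      simp only [Prod.mk.injEq] at h
      simp only [Prod.mk.injEq]
      omega
    have hinjz : Function.Injective (fun p : ℕ × ℕ × ℕ => (p.1, p.2.1, p.2.2 + 1)) := by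
      rintro ⟨a1, a2, a3⟩ ⟨b1, b2, b3⟩ h
      simp only [Prod.mk.injEq] at h
      simp only [Prod.mk.injEq]
      omega
    have hcX : (d.sum fun p r => r • μ c (p.1 + 1, p.2.1, p.2.2)) =
        d.sum fun p r => ((-1 : k) ^ n * r) • μ c (p.1 + 1, p.2.1, p.2.2) := by
      have h := hcen 1 (Xe c) hX1
      rw [mul_one] at h
      calc (d.sum fun p r => r • μ c (p.1 + 1, p.2.1, p.2.2)) = w * Xe c := by
            rw [← hd, Finsupp.sum_mul]
            exact Finsupp.sum_congr fun p _ => by rw [smul_mul_assoc, mu_mul_x]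
        _ = ((-1 : k) ^ n) • (Xe c * w) := h
        _ = d.sum fun p r => ((-1 : k) ^ n * r) • μ c (p.1 + 1, p.2.1, p.2.2) := by
            rw [← hd, Finsupp.mul_sum, Finsupp.smul_sum]
            exact Finsupp.sum_congr fun p _ => by
              rw [mul_smul_comm, x_mul_mu, smul_smul]
    have hcY : (d.sum fun p r => (r * c ^ p.2.2) • μ c (p.1, p.2.1 + 1, p.2.2)) =
        d.sum fun p r => ((-1 : k) ^ n * r) • μ c (p.1, p.2.1 + 1, p.2.2) := by
      have h := hcen 1 (Ye c) hY1
      rw [mul_one] at h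
      calc (d.sum fun p r => (r * c ^ p.2.2) • μ c (p.1, p.2.1 + 1, p.2.2)) = w * Ye c := by
            rw [← hd, Finsupp.sum_mul]
            exact Finsupp.sum_congr fun p _ => by
              rw [smul_mul_assoc, mu_mul_y, smul_smul]
        _ = ((-1 : k) ^ n) • (Ye c * w) := h
        _ = d.sum fun p r => ((-1 : k) ^ n * r) • μ c (p.1, p.2.1 + 1, p.2.2) := by
            rw [← hd, Finsupp.mul_sum, Finsupp.smul_sum]
            exact Finsupp.sum_congr fun p _ => by
              rw [mul_smul_comm, y_mul_mu, smul_smul]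
    have hcZ : (d.sum fun p r => r • μ c (p.1, p.2.1, p.2.2 + 1)) =
        d.sum fun p r => ((-1 : k) ^ n * (r * c ^ p.2.1)) • μ c (p.1, p.2.1, p.2.2 + 1) := by
      have h := hcen 1 (Ze c) hZ1
      rw [mul_one] at h
      calc (d.sum fun p r => r • μ c (p.1, p.2.1, p.2.2 + 1)) = w * Ze c := by
            rw [← hd, Finsupp.sum_mul]
            exact Finsupp.sum_congr fun p _ => by rw [smul_mul_assoc, mu_mul_z]
        _ = ((-1 : k) ^ n) • (Ze c * w) := h
        _ = d.sum fun p r => ((-1 : k) ^ n * (r * c ^ p.2.1)) • μ c (p.1, p.2.1, p.2.2 + 1) := by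
            rw [← hd, Finsupp.mul_sum, Finsupp.smul_sum]
            exact Finsupp.sum_congr fun p _ => by
              rw [mul_smul_comm, z_mul_mu, smul_smul, smul_smul, mul_assoc]
    -- ε = 1
    have hε : ((-1 : k) ^ n) = 1 := by
      have h := coeff_eq c hinjx hcX hq
      have hdq : d q ≠ 0 := Finsupp.mem_support_iff.mp hq
      have : (1 : k) * d q = (-1 : k) ^ n * d q := by rw [one_mul]; exact h
      exact (mul_right_cancel₀ hdq this).symm
    -- support structure
    have hsupp : ∀ p ∈ d.support, p.2.1 = 0 ∧ p.2.2 = 0 := by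
      intro p hp
      have hdp : d p ≠ 0 := Finsupp.mem_support_iff.mp hp
      have hy := coeff_eq c hinjy hcY hp
      have hz := coeff_eq c hinjz hcZ hp
      rw [hε, one_mul] at hy hz
      constructor
      · by_contra hj
        refine hcroot p.2.1 (Nat.one_le_iff_ne_zero.mpr hj) ?_
        have : d p * c ^ p.2.1 = d p * 1 := by rw [mul_one]; exact hz.symm
        exact mul_left_cancel₀ hdp this
      · by_contra hl
        refine hcroot p.2.2 (Nat.one_le_iff_ne_zero.mpr hl) ?_
        have : d p * c ^ p.2.2 = d p * 1 := by rw [mul_one]; exact hy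
        exact mul_left_cancel₀ hdp this
    -- n is even
    have hneven : Even n := by
      rcases Nat.even_or_odd n with h | h
      · exact h
      · exfalso
        rw [h.neg_one_pow] at hε
        exact h2 (by linear_combination -hε)
    have hps : ∀ p : ℕ × ℕ × ℕ, p.2.1 = 0 → p.2.2 = 0 → p = (p.1, 0, 0) := by
      rintro ⟨a, b, e⟩ hb he
      dsimp only at hb he
      subst hb; subst he; rfl
    -- projections kill off-degree parts
    have hdm : ∀ m : ℕ, m ≠ n → d (m, 0, 0) = 0 := by
      intro m hm
      by_contra hdm0
      have hmem : ((m : ℕ), (0 : ℕ), (0 : ℕ)) ∈ d.support := Finsupp.mem_support_iff.mpr hdm0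
      set P : RingQuot (relQS k c) →ₗ[k] RingQuot (relQS k c) :=
        (𝒜 m).subtype ∘ₗ (DirectSum.component k ℕ (fun i => 𝒜 i) m) ∘ₗ
          (DirectSum.decomposeLinearEquiv 𝒜).toLinearMap with hP
      have hPw : P w = 0 := by
        show ((DirectSum.decompose 𝒜 w) m : RingQuot (relQS k c)) = 0
        exact DirectSum.decompose_of_mem_ne 𝒜 hwn (Ne.symm hm)
      have hPmu : ∀ i : ℕ, P (Xe c ^ i) = if i = m then Xe c ^ i else 0 := by
        intro i
        by_cases him : i = m
        · subst him
          rw [if_pos rfl]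
          show ((DirectSum.decompose 𝒜 (Xe c ^ i)) i : RingQuot (relQS k c)) = _
          exact DirectSum.decompose_of_mem_same 𝒜 (hXpow i)
        · rw [if_neg him]
          show ((DirectSum.decompose 𝒜 (Xe c ^ i)) m : RingQuot (relQS k c)) = 0
          exact DirectSum.decompose_of_mem_ne 𝒜 (hXpow i) him
      have hPsum : P w = d.sum fun p r => r • P (μ c p) := by
        rw [← hd, map_finsuppSum]
        exact Finsupp.sum_congr fun p _ => by rw [map_smul]
      rw [hPw] at hPsum
      rw [Finsupp.sum] at hPsum
      rw [Finset.sum_eq_single_of_mem ((m : ℕ), (0 : ℕ), (0 : ℕ)) hmem] at hPsum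
      · rw [mu_x, hPmu, if_pos rfl] at hPsum
        have hXm : Xe c ^ m ≠ 0 := by
          intro h0
          have := v_mu c ((m : ℕ), (0 : ℕ), (0 : ℕ))
          rw [mu_x, h0, map_zero] at this
          exact one_ne_zero (Finsupp.single_eq_zero.mp this.symm)
        rcases smul_eq_zero.mp hPsum.symm with h | h
        · exact hdm0 h
        · exact hXm h
      · intro p hp hpne
        obtain ⟨hj, hl⟩ := hsupp p hp
        have hp1 : p.1 ≠ m := by
          intro h1
          exact hpne (by rw [hps p hj hl, h1])
        rw [hps p hj hl, mu_x, hPmu, if_neg hp1, smul_zero]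
    -- conclude : d is supported at (n,0,0)
    have hsub : d.support ⊆ {((n : ℕ), (0 : ℕ), (0 : ℕ))} := by
      intro p hp
      obtain ⟨hj, hl⟩ := hsupp p hp
      have hdp : d p ≠ 0 := Finsupp.mem_support_iff.mp hp
      have hp1 : p.1 = n := by
        by_contra h1
        apply hdp
        rw [hps p hj hl]
        exact hdm p.1 h1
      simp only [Finset.mem_singleton]
      rw [hps p hj hl, hp1]
    have hdsingle : d = Finsupp.single ((n : ℕ), (0 : ℕ), (0 : ℕ))
        (d ((n : ℕ), (0 : ℕ), (0 : ℕ))) := Finsupp.support_subset_singleton.mp hsub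
    have hw : w = d ((n : ℕ), (0 : ℕ), (0 : ℕ)) • Xe c ^ n := by
      rw [← hd, hdsingle]
      rw [Finsupp.sum_single_index (by simp), mu_x, Finsupp.single_eq_same]
    obtain ⟨t, ht⟩ := hneven
    have hXn : Xe c ^ n = ((g 0) ^ 2) ^ t := by
      rw [hgx, ← pow_mul]
      congr 1
      omega
    rw [hw, hXn]
    exact Subalgebra.smul_mem _
      (Subalgebra.pow_mem _ (Algebra.self_mem_adjoin_singleton k _) t) _
  · rw [Algebra.adjoin_le_iff, Set.singleton_subset_iff]
    exact Algebra.subset_adjoin hx2mem
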